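/- The Haar functional h on the twisted sphere 𝕊_q^N is a trace: h(fg) = h(gf) for all f, g ∈ 𝕊_q^N. Equivalently, for a monomial x^{i_1}⋯x^{i_{2n}} on which h does not vanish (so its multiset of indices is a union of companion pairs {j,j'}), cyclically rotating the last generator to the front leaves the value of h unchanged: h(x^{i_1}⋯x^{i_{2n}}) = h(x^{i_{2n}} x^{i_1}⋯x^{i_{2n-1}}). -/

import Mathlib

/-- The defining relations of the twisted quantum Euclidean plane:
`x^a x^b = q(a,b) x^b x^a`. -/
def twistRel {N : ℕ} (q : Fin N → Fin N → ℂ) :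
    FreeAlgebra ℂ (Fin N) → FreeAlgebra ℂ (Fin N) → Prop :=
  fun u v => ∃ a b : Fin N,
    u = FreeAlgebra.ι ℂ a * FreeAlgebra.ι ℂ b ∧
    v = q a b • (FreeAlgebra.ι ℂ b * FreeAlgebra.ι ℂ a)

/-- The twisted quantum Euclidean plane `ℝ_q^N`. -/
abbrev TwistedPlane {N : ℕ} (q : Fin N → Fin N → ℂ) := RingQuot (twistRel q)

/-- The coordinate generators of the twisted plane. -/
def X {N : ℕ} (q : Fin N → Fin N → ℂ) (a : Fin N) : TwistedPlane q :=
  RingQuot.mkAlgHom ℂ (twistRel q) (FreeAlgebra.ι ℂ a)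

/-- The central element `c = Σ_a x^a x^{a'}` (with `g_{ab} = δ_{a,b'}`,
primed index `a' = Fin.rev a`). -/
def cElem {N : ℕ} (q : Fin N → Fin N → ℂ) : TwistedPlane q :=
  ∑ a, X q a * X q (Fin.rev a)

namespace HaarTraceAux

variable {N : ℕ} (q : Fin (N + 1) → Fin (N + 1) → ℂ)

/-- monomial attached to a list of indices -/
def mon (L : List (Fin (N + 1))) : TwistedPlane q := (L.map (X q)).prod

@[simp] lemma mon_nil : mon q ([] : List (Fin (N+1))) = 1 := rfl

@[simp] lemma mon_cons (a : Fin (N+1)) (L : List (Fin (N+1))) :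
    mon q (a :: L) = X q a * mon q L := by simp [mon]

lemma mon_append (L M : List (Fin (N+1))) :
    mon q (L ++ M) = mon q L * mon q M := by simp [mon]

lemma X_comm (a b : Fin (N+1)) :
    X q a * X q b = q a b • (X q b * X q a) := by
  have hrel : twistRel q (FreeAlgebra.ι ℂ a * FreeAlgebra.ι ℂ b)
      (q a b • (FreeAlgebra.ι ℂ b * FreeAlgebra.ι ℂ a)) := ⟨a, b, rfl, rfl⟩
  have := RingQuot.mkAlgHom_rel ℂ hrel
  simpa [X, map_mul, map_smul] using this

lemma mon_commute (L : List (Fin (N+1))) (j : Fin (N+1)) :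
    mon q L * X q j = ((L.map fun a => q a j).prod) • (X q j * mon q L) := by
  induction L with
  | nil => simp
  | cons a L ih =>
    calc mon q (a :: L) * X q j = X q a * (mon q L * X q j) := by
          rw [mon_cons, mul_assoc]
      _ = X q a * (((L.map fun a => q a j).prod) • (X q j * mon q L)) := by rw [ih]
      _ = ((L.map fun a => q a j).prod) • ((X q a * X q j) * mon q L) := by
          rw [mul_smul_comm, mul_assoc]
      _ = ((L.map fun a => q a j).prod) • ((q a j • (X q j * X q a)) * mon q L) := by
          rw [X_comm]
      _ = (((a :: L).map fun a => q a j).prod) • (X q j * mon q (a :: L)) := by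
          rw [smul_mul_assoc, smul_smul, List.map_cons, List.prod_cons, mon_cons,
            mul_comm ((L.map fun a => q a j).prod), mul_assoc]

lemma qpair (h3 : ∀ a b, q a b * q a (Fin.rev b) = 1)
    (h4 : ∀ a b, q a b = q (Fin.rev a) (Fin.rev b)) (a j : Fin (N+1)) :
    q a j * q (Fin.rev a) j = 1 := by
  rw [h4 (Fin.rev a) j, Fin.rev_rev]
  exact h3 a j

/-- product of `q a j` over a rev-closed multiset of even size is 1 -/
lemma prod_q_one (h3 : ∀ a b, q a b * q a (Fin.rev b) = 1)
    (h4 : ∀ a b, q a b = q (Fin.rev a) (Fin.rev b)) (j : Fin (N+1)) :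
    ∀ n : ℕ, ∀ S : Multiset (Fin (N+1)),
    Multiset.card S = n → Even n → (∀ a, S.count a = S.count (Fin.rev a)) →
    (S.map (fun a => q a j)).prod = 1 := by
  intro n
  induction n using Nat.strong_induction_on with
  | _ n ih =>
    intro S hcard heven hcount
    by_cases hex : ∃ b ∈ S, Fin.rev b ≠ b
    · obtain ⟨b, hbS, hbne⟩ := hex
      have hrb : Fin.rev b ∈ S.erase b := by
        rw [Multiset.mem_erase_of_ne hbne, ← Multiset.count_pos, ← hcount b,
          Multiset.count_pos]
        exact hbS
      set S'' := (S.erase b).erase (Fin.rev b) with hS''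
      have hS : b ::ₘ Fin.rev b ::ₘ S'' = S := by
        rw [hS'', Multiset.cons_erase hrb, Multiset.cons_erase hbS]
      have key : ∀ c, S.count c = S''.count c
          + (if c = b then 1 else 0) + (if c = Fin.rev b then 1 else 0) := by
        intro c
        rw [← hS, Multiset.count_cons, Multiset.count_cons]
        ring
      have hcount'' : ∀ a, S''.count a = S''.count (Fin.rev a) := by
        intro a
        have e1 := key a
        have e2 := key (Fin.rev a)
        have r1 : (Fin.rev a = b) ↔ (a = Fin.rev b) :=
          ⟨fun h => by rw [← h, Fin.rev_rev], fun h => by rw [h, Fin.rev_rev]⟩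
        have r2 : (Fin.rev a = Fin.rev b) ↔ (a = b) := Fin.rev_injective.eq_iff
        rw [if_congr r1 rfl rfl, if_congr r2 rfl rfl] at e2
        have hca := hcount a
        split_ifs at e1 e2 <;> omega
      have hcard'' : Multiset.card S'' = n - 2 := by
        have : Multiset.card S = Multiset.card S'' + 2 := by
          rw [← hS]; simp
        omega
      have hn2 : 2 ≤ n := by
        have : 0 < Multiset.card S := Multiset.card_pos.mpr (by rintro rfl; simp at hbS)
        rcases heven with ⟨r, hr⟩
        omega
      have heven'' : Even (n - 2) := by
        rcases heven with ⟨r, hr⟩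
        exact ⟨r - 1, by omega⟩
      have hres := ih (n - 2) (by omega) S'' hcard'' heven'' hcount''
      rw [← hS]
      simp only [Multiset.map_cons, Multiset.prod_cons, hres, mul_one, ← mul_assoc]
      exact qpair q h3 h4 b j
    · push_neg at hex
      by_cases hS0 : S = 0
      · simp [hS0]
      · obtain ⟨b, hbS⟩ := Multiset.exists_mem_of_ne_zero hS0
        have hfix : ∀ c ∈ S, c = b := by
          intro c hc
          have hcfix := hex c hc
          have hbfix := hex b hbS
          have hc1 : (Fin.rev c).val = c.val := congrArg Fin.val hcfix
          have hb1 : (Fin.rev b).val = b.val := congrArg Fin.val hbfix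
          rw [Fin.val_rev] at hc1 hb1
          have := c.isLt
          have := b.isLt
          exact Fin.ext (by omega)
        have hrepl : S = Multiset.replicate n b := by
          rw [← hcard]; exact Multiset.eq_replicate_card.mpr hfix
        rcases heven with ⟨r, hr⟩
        rw [hrepl, Multiset.map_replicate, Multiset.prod_replicate, hr, pow_add,
          ← mul_pow]
        have : q b j * q b j = 1 := by
          nth_rewrite 2 [← hex b hbS]
          exact qpair q h3 h4 b j
        rw [this, one_pow]

/-- A list is "bad" if its index multiset is not closed under `Fin.rev`. -/
def bad (L : List (Fin (N+1))) : Prop :=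
  ∃ a, (↑L : Multiset (Fin (N+1))).count a ≠ (↑L : Multiset (Fin (N+1))).count (Fin.rev a)

lemma D_mon (D : Fin (N + 1) → Module.End ℂ (TwistedPlane q))
    (hD1 : ∀ s, D s 1 = 0)
    (hD2 : ∀ s a f, D s (X q a * f) =
      (if a = s then f else 0) + q a s • (X q a * D s f))
    (s : Fin (N+1)) : ∀ L : List (Fin (N+1)), D s (mon q L) ∈
    Submodule.span ℂ {y : TwistedPlane q |
      ∃ L' : List (Fin (N+1)), (s ::ₘ (↑L' : Multiset (Fin (N+1)))) = ↑L ∧ y = mon q L'} := by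
  intro L
  induction L with
  | nil => rw [mon_nil, hD1]; exact Submodule.zero_mem _
  | cons a L ih =>
    rw [mon_cons, hD2]
    refine Submodule.add_mem _ ?_ ?_
    · split_ifs with has
      · subst has
        exact Submodule.subset_span ⟨L, by rw [Multiset.cons_coe], rfl⟩
      · exact Submodule.zero_mem _
    · refine Submodule.smul_mem _ _ ?_
      have hmap : Submodule.span ℂ {y : TwistedPlane q |
            ∃ L' : List (Fin (N+1)), (s ::ₘ (↑L' : Multiset (Fin (N+1)))) = ↑L ∧ y = mon q L'} ≤
          Submodule.comap (LinearMap.mulLeft ℂ (X q a))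
            (Submodule.span ℂ {y : TwistedPlane q |
              ∃ L' : List (Fin (N+1)), (s ::ₘ (↑L' : Multiset (Fin (N+1)))) = ↑(a :: L)
                ∧ y = mon q L'}) := by
        rw [Submodule.span_le]
        rintro y ⟨L', hL', rfl⟩
        refine Submodule.subset_span ⟨a :: L', ?_, ?_⟩
        · rw [← Multiset.cons_coe, Multiset.cons_swap, hL', Multiset.cons_coe]
        · simp [LinearMap.mulLeft_apply]
      exact hmap ih

lemma delta_kill (D : Fin (N + 1) → Module.End ℂ (TwistedPlane q))
    (hD1 : ∀ s, D s 1 = 0)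
    (hD2 : ∀ s a f, D s (X q a * f) =
      (if a = s then f else 0) + q a s • (X q a * D s f)) :
    ∀ m : ℕ, ∀ L : List (Fin (N+1)), bad L → L.length ≤ 2 * m →
    (((∑ j, D j * D (Fin.rev j)) : Module.End ℂ (TwistedPlane q)) ^ m) (mon q L) = 0 := by
  intro m
  induction m with
  | zero =>
    intro L hbad hlen
    have : L = [] := List.length_eq_zero_iff.mp (by omega)
    subst this
    obtain ⟨a, ha⟩ := hbad
    simp at ha
  | succ m ih =>
    intro L hbad hlen
    rw [pow_succ, Module.End.mul_apply, LinearMap.sum_apply, map_sum]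
    refine Finset.sum_eq_zero ?_
    intro j _
    rw [Module.End.mul_apply]
    set Δ : Module.End ℂ (TwistedPlane q) := ∑ j, D j * D (Fin.rev j) with hΔ
    have step1 : ∀ L1 : List (Fin (N+1)), (Fin.rev j ::ₘ (↑L1 : Multiset (Fin (N+1)))) = ↑L →
        Submodule.span ℂ {z : TwistedPlane q |
          ∃ L2 : List (Fin (N+1)), (j ::ₘ (↑L2 : Multiset (Fin (N+1)))) = ↑L1 ∧ z = mon q L2} ≤
        LinearMap.ker (Δ ^ m) := by
      intro L1 hL1
      rw [Submodule.span_le]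
      rintro z ⟨L2, hL2, rfl⟩
      have hm : (↑L : Multiset (Fin (N+1)))
          = Fin.rev j ::ₘ j ::ₘ (↑L2 : Multiset (Fin (N+1))) := by
        rw [← hL1, ← hL2]
      have key : ∀ c : Fin (N+1), (↑L : Multiset (Fin (N+1))).count c
          = (↑L2 : Multiset (Fin (N+1))).count c
          + (if c = j then 1 else 0) + (if c = Fin.rev j then 1 else 0) := by
        intro c
        rw [hm, Multiset.count_cons, Multiset.count_cons]
        try ring
      have hbad2 : bad L2 := by
        obtain ⟨a, ha⟩ := hbad
        have e1 := key a
        have e2 := key (Fin.rev a)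
        have r1 : (Fin.rev a = j) ↔ (a = Fin.rev j) :=
          ⟨fun h => by rw [← h, Fin.rev_rev], fun h => by rw [h, Fin.rev_rev]⟩
        have r2 : (Fin.rev a = Fin.rev j) ↔ (a = j) := Fin.rev_injective.eq_iff
        rw [if_congr r1 rfl rfl, if_congr r2 rfl rfl] at e2
        refine ⟨a, ?_⟩
        split_ifs at e1 e2 <;> omega
      have hlen2 : L2.length ≤ 2 * m := by
        have : (↑L : Multiset (Fin (N+1))).card
            = (↑L2 : Multiset (Fin (N+1))).card + 2 := by rw [hm]; simp
        simp only [Multiset.coe_card] at this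
        omega
      exact LinearMap.mem_ker.mpr (ih L2 hbad2 hlen2)
    have step2 : Submodule.span ℂ {y : TwistedPlane q |
          ∃ L1 : List (Fin (N+1)), (Fin.rev j ::ₘ (↑L1 : Multiset (Fin (N+1)))) = ↑L
            ∧ y = mon q L1} ≤
        Submodule.comap (D j) (LinearMap.ker (Δ ^ m)) := by
      rw [Submodule.span_le]
      rintro y ⟨L1, hL1, rfl⟩
      have := D_mon q D hD1 hD2 j L1
      exact step1 L1 hL1 this
    have hmem := step2 (D_mon q D hD1 hD2 (Fin.rev j) L)
    exact LinearMap.mem_ker.mp hmem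

lemma ofFn_mon (L : List (Fin (N+1))) (n : ℕ) (h : L.length = n) :
    (List.ofFn fun k : Fin n => X q (L.get (Fin.cast h.symm k))) = L.map (X q) := by
  apply List.ext_getElem
  · simp [h]
  · intro i h1 h2
    simp [List.getElem_ofFn]

lemma H_odd' (H : TwistedPlane q →ₗ[ℂ] ℂ)
    (Hodd : ∀ (m : ℕ) (i : Fin (2 * m + 1) → Fin (N + 1)),
      H ((List.ofFn fun k => X q (i k)).prod) = 0)
    (L : List (Fin (N+1))) (h : Odd L.length) : H (mon q L) = 0 := by
  obtain ⟨m, hm⟩ := h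
  have hl : L.length = 2 * m + 1 := hm
  have := Hodd m (fun k => L.get (Fin.cast hl.symm k))
  rwa [ofFn_mon q L (2 * m + 1) hl] at this

lemma H_bad
    (D : Fin (N + 1) → Module.End ℂ (TwistedPlane q))
    (hD1 : ∀ s, D s 1 = 0)
    (hD2 : ∀ s a f, D s (X q a * f) =
      (if a = s then f else 0) + q a s • (X q a * D s f))
    (H : TwistedPlane q →ₗ[ℂ] ℂ)
    (Hodd : ∀ (m : ℕ) (i : Fin (2 * m + 1) → Fin (N + 1)),
      H ((List.ofFn fun k => X q (i k)).prod) = 0)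
    (Heven : ∀ (m : ℕ) (i : Fin (2 * m) → Fin (N + 1)),
      ((∑ j, D j * D (Fin.rev j)) ^ m) ((List.ofFn fun k => X q (i k)).prod)
        = ((2 ^ m * (m.factorial : ℂ) * ∏ k ∈ Finset.range m, ((N : ℂ) + 1 + 2 * k))
            * H ((List.ofFn fun k => X q (i k)).prod)) • 1)
    (hone : (1 : TwistedPlane q) ≠ 0) (L : List (Fin (N+1))) (hbad : bad L) :
    H (mon q L) = 0 := by
  rcases Nat.even_or_odd L.length with he | ho
  · obtain ⟨m, hm⟩ := he
    have hl : L.length = 2 * m := by omega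
    have heq := Heven m (fun k => L.get (Fin.cast hl.symm k))
    rw [ofFn_mon q L (2 * m) hl] at heq
    have hz := delta_kill q D hD1 hD2 m L hbad (by omega)
    rw [show (L.map (X q)).prod = mon q L from rfl, hz] at heq
    by_contra hH
    set c : ℂ := 2 ^ m * (m.factorial : ℂ) * ∏ k ∈ Finset.range m, ((N : ℂ) + 1 + 2 * k)
      with hc
    have hcne : c ≠ 0 := by
      refine mul_ne_zero (mul_ne_zero (pow_ne_zero _ two_ne_zero)
        (Nat.cast_ne_zero.mpr m.factorial_ne_zero)) ?_
      refine Finset.prod_ne_zero_iff.mpr fun k _ => ?_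
      have : ((N : ℂ) + 1 + 2 * k) = ((N + 1 + 2 * k : ℕ) : ℂ) := by push_cast; ring
      rw [this]
      exact Nat.cast_ne_zero.mpr (by omega)
    have hne : c * H (mon q L) ≠ 0 := mul_ne_zero hcne hH
    apply hone
    calc (1 : TwistedPlane q)
        = (c * H (mon q L))⁻¹ • ((c * H (mon q L)) • (1 : TwistedPlane q)) := by
          rw [smul_smul, inv_mul_cancel₀ hne, one_smul]
      _ = 0 := by rw [← heq, smul_zero]
  · exact H_odd' q H Hodd L ho

lemma rot
    (h1 : ∀ a, q a a = 1)
    (h3 : ∀ a b, q a b * q a (Fin.rev b) = 1)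
    (h4 : ∀ a b, q a b = q (Fin.rev a) (Fin.rev b))
    (D : Fin (N + 1) → Module.End ℂ (TwistedPlane q))
    (hD1 : ∀ s, D s 1 = 0)
    (hD2 : ∀ s a f, D s (X q a * f) =
      (if a = s then f else 0) + q a s • (X q a * D s f))
    (H : TwistedPlane q →ₗ[ℂ] ℂ)
    (Hodd : ∀ (m : ℕ) (i : Fin (2 * m + 1) → Fin (N + 1)),
      H ((List.ofFn fun k => X q (i k)).prod) = 0)
    (Heven : ∀ (m : ℕ) (i : Fin (2 * m) → Fin (N + 1)),
      ((∑ j, D j * D (Fin.rev j)) ^ m) ((List.ofFn fun k => X q (i k)).prod)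
        = ((2 ^ m * (m.factorial : ℂ) * ∏ k ∈ Finset.range m, ((N : ℂ) + 1 + 2 * k))
            * H ((List.ofFn fun k => X q (i k)).prod)) • 1)
    (hone : (1 : TwistedPlane q) ≠ 0) (L : List (Fin (N+1))) (j : Fin (N+1)) :
    H (mon q (L ++ [j])) = H (mon q (j :: L)) := by
  have hco : mon q (L ++ [j]) = ((L.map fun a => q a j).prod) • mon q (j :: L) := by
    rw [mon_append, mon_cons]
    simpa using mon_commute q L j
  rw [hco, map_smul, smul_eq_mul]
  rcases Nat.even_or_odd (L.length + 1) with he | ho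
  · by_cases hb : bad (j :: L)
    · rw [H_bad q D hD1 hD2 H Hodd Heven hone (j :: L) hb, mul_zero]
    · have hcount : ∀ a, (↑(j :: L) : Multiset (Fin (N+1))).count a
          = (↑(j :: L) : Multiset (Fin (N+1))).count (Fin.rev a) := by
        intro a
        by_contra hcon
        exact hb ⟨a, hcon⟩
      have hprod := prod_q_one q h3 h4 j (L.length + 1) (↑(j :: L))
        (by simp) he hcount
      have hmapco : ((↑(j :: L) : Multiset (Fin (N+1))).map (fun a => q a j)).prod
          = q j j * (L.map fun a => q a j).prod := by
        rw [Multiset.map_coe]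
        simp
      rw [hmapco, h1 j, one_mul] at hprod
      rw [hprod, one_mul]
  · rw [H_odd' q H Hodd (j :: L) (by simpa using ho), mul_zero]

lemma cyc
    (h1 : ∀ a, q a a = 1)
    (h3 : ∀ a b, q a b * q a (Fin.rev b) = 1)
    (h4 : ∀ a b, q a b = q (Fin.rev a) (Fin.rev b))
    (D : Fin (N + 1) → Module.End ℂ (TwistedPlane q))
    (hD1 : ∀ s, D s 1 = 0)
    (hD2 : ∀ s a f, D s (X q a * f) =
      (if a = s then f else 0) + q a s • (X q a * D s f))
    (H : TwistedPlane q →ₗ[ℂ] ℂ)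
    (Hodd : ∀ (m : ℕ) (i : Fin (2 * m + 1) → Fin (N + 1)),
      H ((List.ofFn fun k => X q (i k)).prod) = 0)
    (Heven : ∀ (m : ℕ) (i : Fin (2 * m) → Fin (N + 1)),
      ((∑ j, D j * D (Fin.rev j)) ^ m) ((List.ofFn fun k => X q (i k)).prod)
        = ((2 ^ m * (m.factorial : ℂ) * ∏ k ∈ Finset.range m, ((N : ℂ) + 1 + 2 * k))
            * H ((List.ofFn fun k => X q (i k)).prod)) • 1)
    (hone : (1 : TwistedPlane q) ≠ 0) :
    ∀ (M L : List (Fin (N+1))), H (mon q (L ++ M)) = H (mon q (M ++ L)) := by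
  intro M
  induction M with
  | nil => intro L; simp
  | cons j M' ih =>
    intro L
    calc H (mon q (L ++ j :: M')) = H (mon q ((L ++ [j]) ++ M')) := by
          rw [List.append_cons]
      _ = H (mon q (M' ++ (L ++ [j]))) := ih (L ++ [j])
      _ = H (mon q ((M' ++ L) ++ [j])) := by rw [List.append_assoc]
      _ = H (mon q (j :: (M' ++ L))) :=
          rot q h1 h3 h4 D hD1 hD2 H Hodd Heven hone (M' ++ L) j
      _ = H (mon q ((j :: M') ++ L)) := rfl

lemma mem_span_mon (x : TwistedPlane q) :
    x ∈ Submodule.span ℂ {y : TwistedPlane q | ∃ L, y = mon q L} := by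
  obtain ⟨y, rfl⟩ := RingQuot.mkAlgHom_surjective ℂ (twistRel q) x
  induction y using FreeAlgebra.induction with
  | grade0 r =>
    rw [AlgHom.commutes, Algebra.algebraMap_eq_smul_one]
    exact Submodule.smul_mem _ _ (Submodule.subset_span ⟨[], rfl⟩)
  | grade1 x =>
    refine Submodule.subset_span ⟨[x], ?_⟩
    simp [X]
  | mul a b ha hb =>
    rw [map_mul]
    refine Submodule.span_induction
      (fun u hu => ?_) (by simp [Submodule.zero_mem]) (fun u v _ _ pu pv => by
        rw [add_mul]; exact Submodule.add_mem _ pu pv)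
      (fun r u _ pu => by rw [smul_mul_assoc]; exact Submodule.smul_mem _ _ pu) ha
    obtain ⟨L, rfl⟩ := hu
    refine Submodule.span_induction (fun v hv => ?_) (by simp [Submodule.zero_mem])
      (fun v w _ _ pv pw => by rw [mul_add]; exact Submodule.add_mem _ pv pw)
      (fun r v _ pv => by rw [mul_smul_comm]; exact Submodule.smul_mem _ _ pv) hb
    obtain ⟨M, rfl⟩ := hv
    exact Submodule.subset_span ⟨L ++ M, (mon_append q L M).symm⟩
  | add a b ha hb =>
    rw [map_add]
    exact Submodule.add_mem _ ha hb

lemma trace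
    (h1 : ∀ a, q a a = 1)
    (h3 : ∀ a b, q a b * q a (Fin.rev b) = 1)
    (h4 : ∀ a b, q a b = q (Fin.rev a) (Fin.rev b))
    (D : Fin (N + 1) → Module.End ℂ (TwistedPlane q))
    (hD1 : ∀ s, D s 1 = 0)
    (hD2 : ∀ s a f, D s (X q a * f) =
      (if a = s then f else 0) + q a s • (X q a * D s f))
    (H : TwistedPlane q →ₗ[ℂ] ℂ)
    (Hodd : ∀ (m : ℕ) (i : Fin (2 * m + 1) → Fin (N + 1)),
      H ((List.ofFn fun k => X q (i k)).prod) = 0)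
    (Heven : ∀ (m : ℕ) (i : Fin (2 * m) → Fin (N + 1)),
      ((∑ j, D j * D (Fin.rev j)) ^ m) ((List.ofFn fun k => X q (i k)).prod)
        = ((2 ^ m * (m.factorial : ℂ) * ∏ k ∈ Finset.range m, ((N : ℂ) + 1 + 2 * k))
            * H ((List.ofFn fun k => X q (i k)).prod)) • 1)
    (hone : (1 : TwistedPlane q) ≠ 0) (f g : TwistedPlane q) :
    H (f * g) = H (g * f) := by
  have hf := mem_span_mon q f
  have hg := mem_span_mon q g
  refine Submodule.span_induction (fun u hu => ?_) (by simp)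
    (fun u v _ _ pu pv => by rw [add_mul, mul_add, map_add, map_add, pu, pv])
    (fun r u _ pu => by
      rw [smul_mul_assoc, mul_smul_comm, map_smul, map_smul, pu]) hf
  obtain ⟨L, rfl⟩ := hu
  refine Submodule.span_induction (fun v hv => ?_) (by simp)
    (fun v w _ _ pv pw => by rw [mul_add, add_mul, map_add, map_add, pv, pw])
    (fun r v _ pv => by
      rw [mul_smul_comm, smul_mul_assoc, map_smul, map_smul, pv]) hg
  obtain ⟨M, rfl⟩ := hv
  rw [← mon_append, ← mon_append]
  exact cyc q h1 h3 h4 D hD1 hD2 H Hodd Heven hone M L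

end HaarTraceAux

/-- the Haar functional `h` on the twisted sphere `𝕊_q^N` is a
trace: `h(fg) = h(gf)`.  Stated on the plane `ℝ_q^{N+1}` through the functional
`h_ℝ` (which induces `h`): `h_ℝ` is tracial, and moreover on a monomial whose
multiset of indices is a union of companion pairs `{j, j'}` (closed under
`Fin.rev`), cyclically rotating the last generator to the front leaves the
value unchanged. -/
theorem haar_is_trace {N : ℕ} (q : Fin (N + 1) → Fin (N + 1) → ℂ)
    (h1 : ∀ a, q a a = 1)
    (h2 : ∀ a b, q a b * q b a = 1)
    (h3 : ∀ a b, q a b * q a (Fin.rev b) = 1)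
    (h4 : ∀ a b, q a b = q (Fin.rev a) (Fin.rev b))
    (D : Fin (N + 1) → Module.End ℂ (TwistedPlane q))
    (hD1 : ∀ s, D s 1 = 0)
    (hD2 : ∀ s a f, D s (X q a * f) =
      (if a = s then f else 0) + q a s • (X q a * D s f))
    (H : TwistedPlane q →ₗ[ℂ] ℂ)
    (Hodd : ∀ (m : ℕ) (i : Fin (2 * m + 1) → Fin (N + 1)),
      H ((List.ofFn fun k => X q (i k)).prod) = 0)
    (Heven : ∀ (m : ℕ) (i : Fin (2 * m) → Fin (N + 1)),
      ((∑ j, D j * D (Fin.rev j)) ^ m) ((List.ofFn fun k => X q (i k)).prod)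
        = ((2 ^ m * (m.factorial : ℂ) * ∏ k ∈ Finset.range m, ((N : ℂ) + 1 + 2 * k))
            * H ((List.ofFn fun k => X q (i k)).prod)) • 1) :
    (∀ f g : TwistedPlane q, H (f * g) = H (g * f)) ∧
    (∀ (L : List (Fin (N + 1))) (j : Fin (N + 1)),
      Multiset.map Fin.rev (↑(L ++ [j]) : Multiset (Fin (N + 1)))
          = (↑(L ++ [j]) : Multiset (Fin (N + 1))) →
        H ((L.map (X q)).prod * X q j) = H (X q j * (L.map (X q)).prod)) := by
  by_cases hone : (1 : TwistedPlane q) = 0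
  · haveI : Subsingleton (TwistedPlane q) := subsingleton_of_zero_eq_one hone.symm
    constructor
    · intro f g; exact congrArg H (Subsingleton.elim _ _)
    · intro L j _; exact congrArg H (Subsingleton.elim _ _)
  · have htr := HaarTraceAux.trace q h1 h3 h4 D hD1 hD2 H Hodd Heven hone
    exact ⟨htr, fun L j _ => htr _ _⟩
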